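/- The generating function of the numbers C_M^{(K,N)} = (N/(KM+N))·C(KM+N, M) is the N-th power of the Fuss-Catalan generating function: Σ_{M≥0} C_M^{(K,N)} t^M = (Σ_{M≥0} C_M^{(K,1)} t^M)^N as formal power series. -/

import Mathlib

open PowerSeries Finset

def fcA (b k c : ℕ) : ℚ :=
  if k = 0 then 1 else
    (Nat.choose (c + b * k) k : ℚ) - b * Nat.choose (c + b * k - 1) (k - 1)

lemma fcA_zero (b c : ℕ) : fcA b 0 c = 1 := if_pos rfl

lemma fcA_succ (b j c : ℕ) :
    fcA b (j+1) c = (Nat.choose (c + b * (j+1)) (j+1) : ℚ)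
      - b * Nat.choose (c + b * (j+1) - 1) j := by
  simp [fcA]

lemma fcA_c_zero (b : ℕ) (hb : 0 < b) (k : ℕ) (hk : 0 < k) : fcA b k 0 = 0 := by
  obtain ⟨j, rfl⟩ := Nat.exists_eq_succ_of_ne_zero hk.ne'
  have hbj : b * (j+1) = b * j + b := by ring
  have h1 : 1 ≤ b * (j+1) := by omega
  have key : (b * (j+1)) * Nat.choose (b * (j+1) - 1) j
      = Nat.choose (b * (j+1)) (j+1) * (j+1) := by
    have := Nat.add_one_mul_choose_eq (b * (j+1) - 1) j
    rwa [Nat.sub_add_cancel h1] at this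
  have key2 : b * Nat.choose (b * (j+1) - 1) j = Nat.choose (b * (j+1)) (j+1) :=
    Nat.eq_of_mul_eq_mul_right (Nat.succ_pos j)
      (by rw [show b * Nat.choose (b*(j+1)-1) j * (j+1)
            = (b*(j+1)) * Nat.choose (b*(j+1)-1) j from by ring, key])
  rw [fcA_succ, Nat.zero_add]
  have : ((b:ℚ)) * Nat.choose (b * (j+1) - 1) j = Nat.choose (b * (j+1)) (j+1) := by
    exact_mod_cast key2
  linarith

lemma fcA_rec (b : ℕ) (hb : 0 < b) (k c : ℕ) :
    fcA b (k+1) (c+1) = fcA b (k+1) c + fcA b k (c + b) := by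
  rcases Nat.eq_zero_or_pos k with rfl | hk
  · rw [fcA_zero, fcA_succ, fcA_succ]
    have hb1 : b * (0+1) = b := by ring
    have e3 : c + 1 + b * (0+1) - 1 = c + b := by omega
    have e1 : c + 1 + b * (0+1) = c + b + 1 := by omega
    have e4 : c + b * (0+1) - 1 = c + b - 1 := by omega
    have e2 : c + b * (0+1) = c + b := by omega
    rw [e3, e1, e4, e2]
    simp [Nat.choose_one_right]
    ring
  · obtain ⟨j, rfl⟩ := Nat.exists_eq_succ_of_ne_zero hk.ne'
    have hrel : b * (j+1+1) = b * (j+1) + b := by ring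
    obtain ⟨m, hm⟩ : ∃ m, c + b * (j+1+1) = m + 1 := ⟨c + b*(j+1+1) - 1, by omega⟩
    rw [fcA_succ, fcA_succ, fcA_succ]
    have eA : c + 1 + b * (j+1+1) - 1 = m + 1 := by omega
    have eB : c + b * (j+1+1) - 1 = m := by omega
    have eC : c + b + b * (j+1) - 1 = m := by omega
    have eD : c + 1 + b * (j+1+1) = m + 2 := by omega
    have eE : c + b * (j+1+1) = m + 1 := by omega
    have eF : c + b + b * (j+1) = m + 1 := by omega
    rw [eA, eB, eC, eD, eE, eF]
    have p1 : Nat.choose (m+2) (j+1+1) = Nat.choose (m+1) (j+1) + Nat.choose (m+1) (j+1+1) :=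
      Nat.choose_succ_succ _ _
    have p2 : Nat.choose (m+1) (j+1) = Nat.choose m j + Nat.choose m (j+1) :=
      Nat.choose_succ_succ _ _
    push_cast [p1, p2]
    ring

lemma fcA_conv (b : ℕ) (hb : 0 < b) (n : ℕ) :
    ∀ a c : ℕ, ∑ k ∈ range (n+1), fcA b k a * fcA b (n-k) c = fcA b n (a+c) := by
  induction n with
  | zero => intro a c; simp [fcA_zero]
  | succ n ih =>
    intro a c
    induction c with
    | zero =>
      rw [Finset.sum_eq_single (n+1)]
      · simp [fcA_zero]
      · intro k hk hne
        have hk' : k < n + 1 := by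
          have h2 := Finset.mem_range.mp hk; omega
        rw [fcA_c_zero b hb (n+1-k) (by omega), mul_zero]
      · intro h; exact absurd (Finset.self_mem_range_succ _) h
    | succ c ihc =>
      have hsplit : ∀ k ∈ range (n+1), fcA b k a * fcA b (n+1-k) (c+1)
          = fcA b k a * fcA b (n+1-k) c + fcA b k a * fcA b (n-k) (c+b) := by
        intro k hk
        have hk' : k ≤ n := Nat.lt_succ_iff.mp (Finset.mem_range.mp hk)
        have e : n + 1 - k = (n - k) + 1 := by omega
        rw [e, fcA_rec b hb (n-k) c, mul_add]
      calc ∑ k ∈ range (n+2), fcA b k a * fcA b (n+1-k) (c+1)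
          = (∑ k ∈ range (n+1), (fcA b k a * fcA b (n+1-k) c + fcA b k a * fcA b (n-k) (c+b)))
            + fcA b (n+1) a * fcA b 0 (c+1) := by
            rw [Finset.sum_range_succ]
            congr 1
            · exact Finset.sum_congr rfl hsplit
            · rw [Nat.sub_self]
        _ = (∑ k ∈ range (n+2), fcA b k a * fcA b (n+1-k) c)
            + ∑ k ∈ range (n+1), fcA b k a * fcA b (n-k) (c+b) := by
            rw [Finset.sum_add_distrib,
              Finset.sum_range_succ (fun k => fcA b k a * fcA b (n+1-k) c) (n+1),
              Nat.sub_self, fcA_zero, fcA_zero]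
            ring
        _ = fcA b (n+1) (a+c) + fcA b n (a + (c+b)) := by rw [ihc, ih a (c+b)]
        _ = fcA b (n+1) (a + (c+1)) := by
            have e1 : a + (c+b) = (a+c) + b := by omega
            have e2 : a + (c+1) = (a+c) + 1 := by omega
            rw [e1, e2, fcA_rec b hb n (a+c)]

lemma fcA_eq_coeff (K n : ℕ) (hK : 0 < K) (hn : 0 < n) (M : ℕ) :
    (n : ℚ) / (K * M + n) * (Nat.choose (K * M + n) M) = fcA K M n := by
  rcases Nat.eq_zero_or_pos M with rfl | hM
  · rw [fcA_zero]
    have hn' : (n:ℚ) ≠ 0 := by exact_mod_cast hn.ne'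
    simp
    exact hn.ne'
  · obtain ⟨m, rfl⟩ := Nat.exists_eq_succ_of_ne_zero hM.ne'
    simp only [Nat.succ_eq_add_one] at *
    have hKm : K * (m+1) = K * m + K := by ring
    have h1 : 1 ≤ K * (m+1) + n := by omega
    have key : (K * (m+1) + n) * Nat.choose (K * (m+1) + n - 1) m
        = Nat.choose (K * (m+1) + n) (m+1) * (m+1) := by
      have := Nat.add_one_mul_choose_eq (K * (m+1) + n - 1) m
      rwa [Nat.sub_add_cancel h1] at this
    rw [fcA_succ]
    have e : n + K * (m+1) = K * (m+1) + n := by omega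
    have e2 : n + K * (m+1) - 1 = K * (m+1) + n - 1 := by omega
    rw [e]
    have hq : ((K:ℚ) * (m+1) + n) * Nat.choose (K * (m+1) + n - 1) m
        = Nat.choose (K * (m+1) + n) (m+1) * ((m:ℚ)+1) := by
      have := congrArg (Nat.cast : ℕ → ℚ) key
      push_cast at this
      linarith [this]
    have hd : ((K:ℚ) * ((m:ℚ)+1) + n) ≠ 0 := by positivity
    have hcast : ((K * (m+1) : ℕ) : ℚ) = (K:ℚ) * ((m:ℚ)+1) := by push_cast; ring
    push_cast
    field_simp
    nlinarith [hq]

theorem fuss_catalan_generating_function (K N : ℕ) (hK : 0 < K) (hN : 0 < N) :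
    (PowerSeries.mk fun M : ℕ =>
        (N : ℚ) / (K * M + N) * (Nat.choose (K * M + N) M)) =
      (PowerSeries.mk fun M : ℕ =>
        (1 : ℚ) / (K * M + 1) * (Nat.choose (K * M + 1) M)) ^ N := by
  have hmk : ∀ n : ℕ, 0 < n →
      (PowerSeries.mk fun M : ℕ => (n : ℚ) / (K * M + n) * (Nat.choose (K * M + n) M))
        = PowerSeries.mk (fun M => fcA K M n) := by
    intro n hn
    ext M
    simp only [coeff_mk]
    exact fcA_eq_coeff K n hK hn M
  have h1 := hmk 1 one_pos
  push_cast at h1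
  rw [hmk N hN, h1]
  have hpow : ∀ n : ℕ, PowerSeries.mk (fun M => fcA K M n)
      = (PowerSeries.mk (fun M => fcA K M 1)) ^ n := by
    intro n
    induction n with
    | zero =>
      ext M
      rcases Nat.eq_zero_or_pos M with rfl | hM
      · simp [fcA_zero]
      · simp [fcA_c_zero K hK M hM, coeff_mk, pow_zero,
          PowerSeries.coeff_one, hM.ne']
    | succ n ih =>
      rw [pow_succ, ← ih]
      ext M
      rw [PowerSeries.coeff_mul, Finset.Nat.sum_antidiagonal_eq_sum_range_succ_mk]
      simp only [coeff_mk]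
      exact (fcA_conv K hK M n 1).symm
  exact hpow N
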